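/- arXiv:1405.7323 — 3 statements merged into one kernel-verified Lean document; each statement's English description precedes it below -/
import Mathlib

section
/- Let β, γ > 0 with β ≠ γ, and let (σ_n)_{n∈ℕ} be any sequence of strictly positive real numbers. Then the infinite product probability measures ⊗_{n∈ℕ} N(0, β⁻¹σ_n²) and ⊗_{n∈ℕ} N(0, γ⁻¹σ_n²) on ℝ^ℕ (with the product σ-algebra) are mutually singular. (This expresses that the Gaussian measures ρ^β and ρ^γ with densities Z⁻¹e^{−(β/2)∫|φ_x|²dx}dφ and Z⁻¹e^{−(γ/2)∫|φ_x|²dx}dφ are singular when β ≠ γ.) -/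
open MeasureTheory ProbabilityTheory Filter Topology
open scoped NNReal ENNReal

lemma map_eval_pi' {ι : Type*} [Fintype ι] (f : ι → Measure ℝ)
    [∀ i, IsProbabilityMeasure (f i)] (i : ι) :
    (Measure.pi f).map (Function.eval i) = f i := by
  classical
  ext s hs
  rw [Measure.map_apply (measurable_pi_apply i) hs, Set.eval_preimage,
    Measure.pi_pi]
  rw [Fintype.prod_eq_single i ?_]
  · simp
  · intro j hj
    simp [Function.update_of_ne hj]

lemma integrable_sq_gaussian {v : ℝ≥0} (hv : v ≠ 0) :
    Integrable (fun t : ℝ => t ^ 2) (gaussianReal 0 v) := by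
  rw [gaussianReal_of_var_ne_zero _ hv]
  rw [integrable_withDensity_iff (measurable_gaussianPDF 0 v) ?_]
  · have hvpos : (0:ℝ) < v := by positivity
    have h1 : Integrable (fun x : ℝ => x ^ (2:ℝ) * Real.exp (-(2 * (v:ℝ))⁻¹ * x ^ 2)) volume :=
      integrable_rpow_mul_exp_neg_mul_sq (by positivity) (by norm_num)
    simp_rw [show ((2:ℝ)) = ((2:ℕ):ℝ) by norm_num, Real.rpow_natCast] at h1
    have h := h1.const_mul (√(2 * Real.pi * v))⁻¹
    apply h.congr
    filter_upwards with x
    rw [gaussianPDF, ENNReal.toReal_ofReal (gaussianPDFReal_nonneg 0 v x)]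
    rw [gaussianPDFReal]
    rw [show -(x - 0)^2/(2*(v:ℝ)) = -(2 * (v:ℝ))⁻¹ * x ^ 2 by field_simp; ring]
    push_cast
    ring
  · filter_upwards with x
    exact ENNReal.ofReal_lt_top

lemma integral_sq_gaussian_pos {v : ℝ≥0} (hv : v ≠ 0) :
    0 < ∫ t, t ^ 2 ∂(gaussianReal 0 v) := by
  rw [integral_pos_iff_support_of_nonneg (fun t => sq_nonneg t) (integrable_sq_gaussian hv)]
  have h0 : (gaussianReal 0 v) {(0:ℝ)} = 0 := by
    rw [gaussianReal_of_var_ne_zero _ hv, withDensity_apply _ (measurableSet_singleton _)]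
    simp [Measure.restrict_singleton]
  have hsupp : Function.support (fun t : ℝ => t ^ 2) = {(0:ℝ)}ᶜ := by
    ext t; simp [Function.mem_support, pow_eq_zero_iff]
  rw [hsupp]
  have := measure_compl (μ := gaussianReal 0 v) (measurableSet_singleton (0:ℝ)) (by simp [h0])
  rw [this, h0]
  simp

lemma integral_sq_gaussian_smul (c : ℝ) (v : ℝ≥0) :
    ∫ t, t ^ 2 ∂(gaussianReal 0 ((.mk (c ^ 2) (sq_nonneg c) : ℝ≥0) * v)) =
      c ^ 2 * ∫ t, t ^ 2 ∂(gaussianReal 0 v) := by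
  have h := gaussianReal_map_const_mul (μ := 0) (v := v) c
  rw [mul_zero] at h
  rw [← h, integral_map (by fun_prop) (by fun_prop)]
  simp_rw [mul_pow]
  rw [integral_const_mul]

lemma marg_eval (μ : Measure (ℕ → ℝ)) [IsProbabilityMeasure μ] (v : ℕ → ℝ≥0)
    (hμ : ∀ s : Finset ℕ, μ.map s.restrict =
      Measure.pi (fun i : s => gaussianReal 0 (v i))) (n : ℕ) :
    μ.map (fun x => x n) = gaussianReal 0 (v n) := by
  have h := hμ {n}
  have heq : (fun x : ℕ → ℝ => x n) =
      (Function.eval (⟨n, by simp⟩ : ({n} : Finset ℕ))) ∘ ({n} : Finset ℕ).restrict := rfl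
  have hmm := Measure.map_map (μ := μ)
    (g := Function.eval (⟨n, by simp⟩ : ({n} : Finset ℕ)))
    (f := ({n} : Finset ℕ).restrict) (measurable_pi_apply _) (Finset.measurable_restrict _)
  rw [heq, ← hmm, h, map_eval_pi']

lemma indep_eval (μ : Measure (ℕ → ℝ)) [IsProbabilityMeasure μ] (v : ℕ → ℝ≥0)
    (hμ : ∀ s : Finset ℕ, μ.map s.restrict =
      Measure.pi (fun i : s => gaussianReal 0 (v i))) {i j : ℕ} (hij : i ≠ j) :
    IndepFun (fun x : ℕ → ℝ => x i) (fun x : ℕ → ℝ => x j) μ := by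
  classical
  rw [indepFun_iff_measure_inter_preimage_eq_mul]
  intro s t hs ht
  have hi : μ ((fun x : ℕ → ℝ => x i) ⁻¹' s) = gaussianReal 0 (v i) s := by
    rw [← Measure.map_apply (measurable_pi_apply i) hs, marg_eval μ v hμ i]
  have hj : μ ((fun x : ℕ → ℝ => x j) ⁻¹' t) = gaussianReal 0 (v j) t := by
    rw [← Measure.map_apply (measurable_pi_apply j) ht, marg_eval μ v hμ j]
  set F : Finset ℕ := {i, j} with hF
  have hiF : i ∈ F := by simp [hF]
  have hjF : j ∈ F := by simp [hF]
  set S : F → Set ℝ := fun k => if (k : ℕ) = i then s else t with hS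
  have hSmeas : ∀ k, MeasurableSet (S k) := by
    intro k
    by_cases h : (k : ℕ) = i
    · simpa [hS, h] using hs
    · simpa [hS, h] using ht
  have hpre : F.restrict ⁻¹' (Set.pi Set.univ S) =
      (fun x : ℕ → ℝ => x i) ⁻¹' s ∩ (fun x : ℕ → ℝ => x j) ⁻¹' t := by
    ext x
    simp only [Set.mem_preimage, Set.mem_pi, Set.mem_univ, forall_true_left,
      Set.mem_inter_iff]
    constructor
    · intro h
      refine ⟨?_, ?_⟩
      · simpa [hS, Finset.restrict] using h ⟨i, hiF⟩
      · simpa [hS, Finset.restrict, hij.symm] using h ⟨j, hjF⟩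
    · rintro ⟨h1, h2⟩ ⟨k, hk⟩
      simp only [hF, Finset.mem_insert, Finset.mem_singleton] at hk
      rcases hk with rfl | rfl
      · simpa [hS, Finset.restrict] using h1
      · simpa [hS, Finset.restrict, hij.symm] using h2
  rw [← hpre, ← Measure.map_apply (Finset.measurable_restrict F)
    (MeasurableSet.univ_pi hSmeas), hμ F, Measure.pi_pi, hi, hj]
  have hprod : (∏ k : F, gaussianReal 0 (v k) (S k)) =
      ∏ n ∈ F, gaussianReal 0 (v n) (if n = i then s else t) :=
    Finset.prod_coe_sort F (fun n => gaussianReal 0 (v n) (if n = i then s else t))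
  rw [hprod, hF, Finset.prod_pair hij, if_pos rfl, if_neg hij.symm]

lemma aux_slln (β : ℝ) (hβ : 0 < β) (σ : ℕ → ℝ) (hσ : ∀ n, 0 < σ n)
    (μ : Measure (ℕ → ℝ)) [IsProbabilityMeasure μ]
    (hμ : ∀ s : Finset ℕ, μ.map s.restrict =
      Measure.pi (fun i : s => gaussianReal 0 (β⁻¹ * σ i ^ 2).toNNReal)) :
    ∀ᵐ x ∂μ, Tendsto (fun n : ℕ => (∑ i ∈ Finset.range n, ((σ i)⁻¹ * x i) ^ 2) / (n : ℝ))
      atTop (𝓝 (∫ t, t ^ 2 ∂(gaussianReal 0 β⁻¹.toNNReal))) := by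
  set v : ℕ → ℝ≥0 := fun n => (β⁻¹ * σ n ^ 2).toNNReal with hv
  set Y : ℕ → (ℕ → ℝ) → ℝ := fun n x => ((σ n)⁻¹ * x n) ^ 2 with hY
  have hv0 : ∀ n, v n ≠ 0 := by
    intro n
    exact (Real.toNNReal_pos.mpr (mul_pos (inv_pos.mpr hβ) (pow_pos (hσ n) 2))).ne'
  have hβinv : β⁻¹.toNNReal ≠ 0 := (Real.toNNReal_pos.mpr (inv_pos.mpr hβ)).ne'
  have hmapc : ∀ n, μ.map (fun x : ℕ → ℝ => (σ n)⁻¹ * x n) = gaussianReal 0 β⁻¹.toNNReal := by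
    intro n
    have heq : (fun x : ℕ → ℝ => (σ n)⁻¹ * x n) =
        (fun t : ℝ => (σ n)⁻¹ * t) ∘ (fun x : ℕ → ℝ => x n) := rfl
    have h1 : μ.map ((fun t : ℝ => (σ n)⁻¹ * t) ∘ (fun x : ℕ → ℝ => x n)) =
        (μ.map (fun x : ℕ → ℝ => x n)).map (fun t : ℝ => (σ n)⁻¹ * t) :=
      (Measure.map_map (measurable_const_mul _) (measurable_pi_apply n)).symm
    rw [heq, h1, marg_eval μ v hμ n, gaussianReal_map_const_mul, mul_zero]
    congr 1
    ext
    rw [NNReal.coe_mul, NNReal.coe_mk, hv]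
    rw [Real.coe_toNNReal _ (mul_pos (inv_pos.mpr hβ) (pow_pos (hσ n) 2)).le,
      Real.coe_toNNReal _ (inv_pos.mpr hβ).le]
    have := (hσ n).ne'
    field_simp
  have hYmeas : ∀ n, Measurable (Y n) :=
    fun n => ((measurable_pi_apply n).const_mul _).pow_const 2
  have hYdist : ∀ n, μ.map (Y n) = (gaussianReal 0 β⁻¹.toNNReal).map (fun t : ℝ => t ^ 2) := by
    intro n
    have heq : Y n = (fun t : ℝ => t ^ 2) ∘ (fun x : ℕ → ℝ => (σ n)⁻¹ * x n) := rfl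
    rw [heq, ← Measure.map_map ((by fun_prop : Measurable fun t : ℝ => t ^ 2))
      ((measurable_pi_apply n).const_mul _), hmapc n]
  have hident : ∀ n, IdentDistrib (Y n) (Y 0) μ μ := fun n =>
    ⟨(hYmeas n).aemeasurable, (hYmeas 0).aemeasurable, by rw [hYdist n, hYdist 0]⟩
  have hint : Integrable (Y 0) μ := by
    have h1 : Integrable (fun t : ℝ => ((σ 0)⁻¹ * t) ^ 2) (μ.map (fun x : ℕ → ℝ => x 0)) := by
      rw [marg_eval μ v hμ 0]
      simpa [mul_pow, inv_pow] using (integrable_sq_gaussian (hv0 0)).const_mul (((σ 0) ^ 2)⁻¹)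
    exact (integrable_map_measure h1.aestronglyMeasurable
      (measurable_pi_apply 0).aemeasurable).mp h1
  have hindep : Pairwise (Function.onFun (IndepFun · · μ) Y) := by
    intro i j hij
    exact (indep_eval μ v hμ hij).comp
      ((measurable_const_mul ((σ i)⁻¹)).pow_const 2)
      ((measurable_const_mul ((σ j)⁻¹)).pow_const 2)
  have hmean : ∫ x, Y 0 x ∂μ = ∫ t, t ^ 2 ∂(gaussianReal 0 β⁻¹.toNNReal) := by
    rw [← hmapc 0, integral_map ((measurable_pi_apply 0).const_mul _).aemeasurable
      (by fun_prop)]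
  have h := strong_law_ae_real Y hint hindep hident
  rw [hmean] at h
  exact h

/-- for `β ≠ γ` (both positive) and any strictly positive weights `(σ_n)`,
the infinite product Gaussian measures `⊗_n N(0, β⁻¹σ_n²)` and `⊗_n N(0, γ⁻¹σ_n²)` on
`ℝ^ℕ` (with the product σ-algebra), characterized by their finite-dimensional marginals,
are mutually singular. -/
theorem gaussian_product_measures_singular
    (β γ : ℝ) (hβ : 0 < β) (hγ : 0 < γ) (hβγ : β ≠ γ)
    (σ : ℕ → ℝ) (hσ : ∀ n, 0 < σ n)
    (μ ν : Measure (ℕ → ℝ)) [IsProbabilityMeasure μ] [IsProbabilityMeasure ν]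
    (hμ : ∀ s : Finset ℕ, μ.map s.restrict =
      Measure.pi (fun i : s => gaussianReal 0 (β⁻¹ * σ i ^ 2).toNNReal))
    (hν : ∀ s : Finset ℕ, ν.map s.restrict =
      Measure.pi (fun i : s => gaussianReal 0 (γ⁻¹ * σ i ^ 2).toNNReal)) :
    μ ⟂ₘ ν := by
  set Iβ : ℝ := ∫ t, t ^ 2 ∂(gaussianReal 0 β⁻¹.toNNReal) with hIβ
  set Iγ : ℝ := ∫ t, t ^ 2 ∂(gaussianReal 0 γ⁻¹.toNNReal) with hIγ
  have hγinv : γ⁻¹.toNNReal ≠ 0 := (Real.toNNReal_pos.mpr (inv_pos.mpr hγ)).ne'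
  have hIγpos : 0 < Iγ := integral_sq_gaussian_pos hγinv
  -- the two limits are distinct
  have hne : Iβ ≠ Iγ := by
    set c : ℝ := Real.sqrt (γ / β) with hc
    have hc2 : c ^ 2 = γ / β := Real.sq_sqrt (div_nonneg hγ.le hβ.le)
    have hvv : gaussianReal 0 ((.mk (c ^ 2) (sq_nonneg c) : ℝ≥0) * γ⁻¹.toNNReal) =
        gaussianReal 0 β⁻¹.toNNReal := by
      congr 1
      ext
      rw [NNReal.coe_mul, NNReal.coe_mk, hc2,
        Real.coe_toNNReal _ (inv_pos.mpr hγ).le, Real.coe_toNNReal _ (inv_pos.mpr hβ).le]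
      field_simp
    have hI : Iβ = c ^ 2 * Iγ := by
      rw [hIβ, hIγ, ← hvv, integral_sq_gaussian_smul]
    intro h
    rw [hI] at h
    have hc1 : c ^ 2 = 1 :=
      mul_right_cancel₀ hIγpos.ne' (h.trans (one_mul Iγ).symm)
    rw [hc2, div_eq_one_iff_eq hβ.ne'] at hc1
    exact hβγ hc1.symm
  have hμae := aux_slln β hβ σ hσ μ hμ
  have hνae := aux_slln γ hγ σ hσ ν hν
  set avg : (ℕ → ℝ) → ℕ → ℝ :=
    fun x n => (∑ i ∈ Finset.range n, ((σ i)⁻¹ * x i) ^ 2) / (n : ℝ) with havg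
  refine ⟨toMeasurable μ {x | ¬ Tendsto (avg x) atTop (𝓝 Iβ)},
    measurableSet_toMeasurable _ _, ?_, ?_⟩
  · rw [measure_toMeasurable]
    exact hμae
  · apply measure_mono_null (t := {x | ¬ Tendsto (avg x) atTop (𝓝 Iγ)})
    · intro x hx
      have hx' : x ∉ {x | ¬ Tendsto (avg x) atTop (𝓝 Iβ)} :=
        fun h => hx (subset_toMeasurable μ _ h)
      simp only [Set.mem_setOf_eq, not_not] at hx'
      intro hT
      exact hne (tendsto_nhds_unique hx' hT)
    · exact hνae
end

section
/- Hellinger integral of a shifted complex Gaussian: let σ > 0 and v ∈ ℂ, and let μ = N_ℂ(0, σ²) and ν = N_ℂ(v, σ²). Then ν is absolutely continuous with respect to μ and the Hellinger integral satisfies ∫_ℂ √(dν/dμ) dμ = e^{−|v|²/(8σ²)}. -/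
open MeasureTheory ProbabilityTheory
open scoped NNReal ENNReal

/-- The complex Gaussian measure `N_ℂ(m, σ²)` on `ℂ` (with `v = σ²`): the pushforward of the
product of the real Gaussian measures `N(Re m, σ²)` and `N(Im m, σ²)` on `ℝ × ℝ` under
`(x, y) ↦ x + i y`. -/
noncomputable def complexGaussian (m : ℂ) (v : ℝ≥0) : Measure ℂ :=
  ((gaussianReal m.re v).prod (gaussianReal m.im v)).map
    (fun p : ℝ × ℝ => (p.1 : ℂ) + p.2 * Complex.I)

lemma exp_combine (c p q r u : ℝ) (h : p + q = r + u) :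
    c * Real.exp p * Real.exp q = Real.exp r * (c * Real.exp u) := by
  rw [mul_assoc, ← Real.exp_add, mul_left_comm, ← Real.exp_add, h]

noncomputable def gRatio (s a x : ℝ) : ℝ := Real.exp (a * x / s - a ^ 2 / (2 * s))

lemma gRatio_nonneg (s a x : ℝ) : 0 ≤ gRatio s a x := (Real.exp_pos _).le

lemma gRatio_meas (s a : ℝ) : Measurable fun x => ENNReal.ofReal (gRatio s a x) := by
  unfold gRatio; fun_prop

lemma gauss_shift (s : ℝ) (hs : 0 < s) (a : ℝ) :
    gaussianReal a s.toNNReal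
      = (gaussianReal 0 s.toNNReal).withDensity (fun x => ENNReal.ofReal (gRatio s a x)) := by
  have hV : s.toNNReal ≠ 0 := by simp [Real.toNNReal_eq_zero, not_le, hs]
  have hVs : ((s.toNNReal : ℝ≥0) : ℝ) = s := Real.coe_toNNReal _ hs.le
  rw [gaussianReal_of_var_ne_zero a hV, gaussianReal_of_var_ne_zero 0 hV,
    ← withDensity_mul _ (measurable_gaussianPDF 0 _) (gRatio_meas s a)]
  congr 1
  funext x
  simp only [gaussianPDF, Pi.mul_apply]
  rw [← ENNReal.ofReal_mul (gaussianPDFReal_nonneg _ _ _)]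
  congr 1
  simp only [gaussianPDFReal, hVs, gRatio]
  have h : -(x - a) ^ 2 / (2 * s) = -(x - 0) ^ 2 / (2 * s) + (a * x / s - a ^ 2 / (2 * s)) := by
    field_simp; ring
  rw [h, Real.exp_add]; ring

lemma gauss_exp_integral (s : ℝ) (hs : 0 < s) (t : ℝ) :
    ∫ x, Real.exp (t * x) ∂(gaussianReal 0 s.toNNReal) = Real.exp (s * t ^ 2 / 2) := by
  have hV : s.toNNReal ≠ 0 := by simp [Real.toNNReal_eq_zero, not_le, hs]
  have hVs : ((s.toNNReal : ℝ≥0) : ℝ) = s := Real.coe_toNNReal _ hs.le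
  rw [gaussianReal_of_var_ne_zero 0 hV]
  have hpdf : (gaussianPDF 0 s.toNNReal)
      = fun x => ((Real.toNNReal (gaussianPDFReal 0 s.toNNReal x) : ℝ≥0) : ℝ≥0∞) := by
    funext x; rfl
  rw [hpdf, integral_withDensity_eq_integral_smul
    ((measurable_gaussianPDFReal 0 s.toNNReal).real_toNNReal)]
  have key : ∀ x : ℝ, (Real.toNNReal (gaussianPDFReal 0 s.toNNReal x)) • Real.exp (t * x)
      = Real.exp (s * t ^ 2 / 2) * gaussianPDFReal (s * t) s.toNNReal x := by
    intro x
    rw [NNReal.smul_def, smul_eq_mul, Real.coe_toNNReal _ (gaussianPDFReal_nonneg _ _ _)]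
    simp only [gaussianPDFReal, hVs]
    exact exp_combine _ _ _ _ _ (by field_simp; ring)
  simp_rw [key]
  rw [integral_const_mul, integral_gaussianPDFReal_eq_one _ hV, mul_one]

lemma sqrt_gRatio_integral (s : ℝ) (hs : 0 < s) (a : ℝ) :
    ∫ x, Real.sqrt (gRatio s a x) ∂(gaussianReal 0 s.toNNReal)
      = Real.exp (-a ^ 2 / (8 * s)) := by
  have h : ∀ x, Real.sqrt (gRatio s a x)
      = Real.exp (-a ^ 2 / (4 * s)) * Real.exp ((a / (2 * s)) * x) := by
    intro x
    rw [gRatio, ← Real.exp_half, ← Real.exp_add]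
    congr 1
    field_simp; ring
  simp_rw [h]
  rw [integral_const_mul, gauss_exp_integral s hs, ← Real.exp_add]
  congr 1
  field_simp; ring

lemma gauss_prod_shift (s : ℝ) (hs : 0 < s) (a b : ℝ) :
    (gaussianReal a s.toNNReal).prod (gaussianReal b s.toNNReal)
      = ((gaussianReal 0 s.toNNReal).prod (gaussianReal 0 s.toNNReal)).withDensity
          (fun p => ENNReal.ofReal (gRatio s a p.1) * ENNReal.ofReal (gRatio s b p.2)) := by
  refine Measure.prod_eq fun u t hu ht => ?_
  rw [withDensity_apply _ (hu.prod ht), ← Measure.prod_restrict,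
    lintegral_prod_mul ((gRatio_meas s a).aemeasurable) ((gRatio_meas s b).aemeasurable)]
  rw [gauss_shift s hs a, gauss_shift s hs b, withDensity_apply _ hu, withDensity_apply _ ht]

/-- Hellinger integral of a shifted complex Gaussian: for `σ > 0` and `v ∈ ℂ`,
with `μ = N_ℂ(0, σ²)` and `ν = N_ℂ(v, σ²)`, `ν` is absolutely continuous with respect to
`μ` and `∫_ℂ √(dν/dμ) dμ = e^{-|v|²/(8σ²)}`. -/
theorem hellinger_integral_shifted_complex_gaussian
    (σ : ℝ) (hσ : 0 < σ) (v : ℂ) :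
    complexGaussian v (σ ^ 2).toNNReal ≪ complexGaussian 0 (σ ^ 2).toNNReal ∧
    (∫ z, Real.sqrt (((complexGaussian v (σ ^ 2).toNNReal).rnDeriv
          (complexGaussian 0 (σ ^ 2).toNNReal) z).toReal)
        ∂(complexGaussian 0 (σ ^ 2).toNNReal)) =
      Real.exp (-‖v‖ ^ 2 / (8 * σ ^ 2)) := by
  set s : ℝ := σ ^ 2 with hs_def
  have hs : 0 < s := by positivity
  set F : ℝ × ℝ → ℂ := fun p => (p.1 : ℂ) + p.2 * Complex.I with hF_def
  have hFeq : F = ⇑Complex.measurableEquivRealProd.symm := by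
    funext p
    rw [Complex.measurableEquivRealProd_symm_apply, Complex.mk_eq_add_mul_I]
  have hF : MeasurableEmbedding F :=
    hFeq ▸ Complex.measurableEquivRealProd.symm.measurableEmbedding
  set P0 : Measure (ℝ × ℝ) := (gaussianReal 0 s.toNNReal).prod (gaussianReal 0 s.toNNReal)
    with hP0_def
  set G : ℝ × ℝ → ℝ≥0∞ :=
    fun p => ENNReal.ofReal (gRatio s v.re p.1) * ENNReal.ofReal (gRatio s v.im p.2) with hG_def
  have hGmeas : Measurable G :=
    ((gRatio_meas s v.re).comp measurable_fst).mul ((gRatio_meas s v.im).comp measurable_snd)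
  have hμ0 : complexGaussian 0 s.toNNReal = P0.map F := by
    simp only [complexGaussian, Complex.zero_re, Complex.zero_im, hP0_def, hF_def]
  have hPv : (gaussianReal v.re s.toNNReal).prod (gaussianReal v.im s.toNNReal)
      = P0.withDensity G := gauss_prod_shift s hs v.re v.im
  have hν : complexGaussian v s.toNNReal = (P0.withDensity G).map F := by
    rw [complexGaussian, hPv]
  constructor
  · rw [hν, hμ0]
    exact (withDensity_absolutelyContinuous P0 G).map hF.measurable
  · have h1 := hF.rnDeriv_map ((gaussianReal v.re s.toNNReal).prod (gaussianReal v.im s.toNNReal)) P0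
    have h2 : (P0.withDensity G).rnDeriv P0 =ᵐ[P0] G :=
      Measure.rnDeriv_withDensity P0 hGmeas
    rw [hμ0]
    have hm : Measurable fun z : ℂ =>
        Real.sqrt (((complexGaussian v s.toNNReal).rnDeriv (P0.map F) z).toReal) := by
      exact Real.continuous_sqrt.measurable.comp
        ((Measure.measurable_rnDeriv _ _).ennreal_toReal)
    rw [integral_map hF.measurable.aemeasurable hm.aestronglyMeasurable]
    have hcongr : ∫ p, Real.sqrt (((complexGaussian v s.toNNReal).rnDeriv (P0.map F) (F p)).toReal) ∂P0
        = ∫ p, Real.sqrt (Real.sqrt (gRatio s v.re p.1) ^ 2 * Real.sqrt (gRatio s v.im p.2) ^ 2) ∂P0 := by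
      refine integral_congr_ae ?_
      filter_upwards [h1, h2] with p hp1 hp2
      rw [show complexGaussian v s.toNNReal
          = Measure.map F ((gaussianReal v.re s.toNNReal).prod (gaussianReal v.im s.toNNReal))
          from rfl, hp1, hPv, hp2, hG_def]
      congr 1
      rw [ENNReal.toReal_mul, ENNReal.toReal_ofReal (gRatio_nonneg _ _ _),
        ENNReal.toReal_ofReal (gRatio_nonneg _ _ _),
        Real.sq_sqrt (gRatio_nonneg _ _ _), Real.sq_sqrt (gRatio_nonneg _ _ _)]
    rw [hcongr]
    have hsimp : ∀ p : ℝ × ℝ, Real.sqrt (Real.sqrt (gRatio s v.re p.1) ^ 2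
          * Real.sqrt (gRatio s v.im p.2) ^ 2)
        = Real.sqrt (gRatio s v.re p.1) * Real.sqrt (gRatio s v.im p.2) := by
      intro p
      rw [← mul_pow, Real.sqrt_sq (by positivity)]
    simp_rw [hsimp]
    have hfin : (∫ p : ℝ × ℝ, Real.sqrt (gRatio s v.re p.1) * Real.sqrt (gRatio s v.im p.2)
          ∂((gaussianReal 0 s.toNNReal).prod (gaussianReal 0 s.toNNReal)))
        = (∫ x, Real.sqrt (gRatio s v.re x) ∂(gaussianReal 0 s.toNNReal))
          * ∫ x, Real.sqrt (gRatio s v.im x) ∂(gaussianReal 0 s.toNNReal) :=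
      integral_prod_mul (f := fun x => Real.sqrt (gRatio s v.re x))
        (g := fun y => Real.sqrt (gRatio s v.im y))
    rw [hP0_def, hfin, sqrt_gRatio_integral s hs, sqrt_gRatio_integral s hs,
      ← Real.exp_add]
    congr 1
    have hnorm : ‖v‖ ^ 2 = v.re ^ 2 + v.im ^ 2 := by
      rw [Complex.sq_norm, Complex.normSq_apply]; ring
    rw [hnorm]
    field_simp
    ring
end

section
/- Let (σ_n)_{n∈ℕ} be strictly positive reals and (v_n)_{n∈ℕ} complex numbers with Σ_{n∈ℕ} |v_n|²/σ_n² = ∞. Then the infinite product probability measures μ = ⊗_{n∈ℕ} N_ℂ(0, σ_n²) and ν = ⊗_{n∈ℕ} N_ℂ(v_n, σ_n²) on ℂ^ℕ (with the product σ-algebra) are mutually singular. (This says that the distribution of the shifted random function w^ω = v + u^ω is singular with respect to that of u^ω = Σ g_n(ω) û_n e^{in·x} when Σ |v̂_n|²/|û_n|² = ∞.) -/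
open MeasureTheory ProbabilityTheory Real Filter Fintype
open scoped NNReal ENNReal

instance complexGaussian_isProb (m : ℂ) (v : ℝ≥0) :
    IsProbabilityMeasure (complexGaussian m v) :=
  Measure.isProbabilityMeasure_map (by fun_prop)

lemma gaussian_mgf_pointwise (m : ℝ) (v : ℝ≥0) (s x : ℝ) :
    rexp (s * x) * gaussianPDFReal m v x
      = rexp (s * m + s ^ 2 * v / 2) * gaussianPDFReal (m + s * v) v x := by
  rcases eq_or_ne v 0 with hv | hv
  · simp [hv]
  have hv' : (v : ℝ) ≠ 0 := by exact_mod_cast hv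
  simp only [gaussianPDFReal]
  rw [mul_left_comm, mul_left_comm (rexp _), ← Real.exp_add, ← Real.exp_add]
  congr 1
  field_simp
  ring

lemma lintegral_exp_gaussianReal (m : ℝ) (v : ℝ≥0) (s : ℝ) :
    ∫⁻ x, ENNReal.ofReal (rexp (s * x)) ∂(gaussianReal m v)
      = ENNReal.ofReal (rexp (s * m + s ^ 2 * v / 2)) := by
  rcases eq_or_ne v 0 with hv | hv
  · simp [hv, lintegral_dirac]
  rw [gaussianReal_of_var_ne_zero _ hv,
    lintegral_withDensity_eq_lintegral_mul _ (measurable_gaussianPDF _ _)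
      (by fun_prop)]
  have : ∀ x, (fun x => gaussianPDF m v x * ENNReal.ofReal (rexp (s * x))) x
      = ENNReal.ofReal (rexp (s * m + s ^ 2 * v / 2))
        * ENNReal.ofReal (gaussianPDFReal (m + s * v) v x) := by
    intro x
    show ENNReal.ofReal (gaussianPDFReal m v x) * _ = _
    rw [← ENNReal.ofReal_mul (gaussianPDFReal_nonneg _ _ _), mul_comm,
      gaussian_mgf_pointwise m v s x,
      ENNReal.ofReal_mul (Real.exp_nonneg _)]
  simp only [Pi.mul_apply]
  rw [lintegral_congr this]
  rw [lintegral_const_mul _ ((measurable_gaussianPDFReal _ _).ennreal_ofReal)]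
  have : ∫⁻ x, ENNReal.ofReal (gaussianPDFReal (m + s * v) v x) = 1 :=
    lintegral_gaussianPDF_eq_one _ hv
  rw [this, mul_one]

lemma lintegral_exp_complexGaussian (c m : ℂ) (v : ℝ≥0) :
    ∫⁻ z, ENNReal.ofReal (rexp ((starRingEnd ℂ c * z).re)) ∂(complexGaussian m v)
      = ENNReal.ofReal (rexp ((starRingEnd ℂ c * m).re + ‖c‖ ^ 2 * v / 2)) := by
  rw [complexGaussian, lintegral_map (by fun_prop) (by fun_prop)]
  have hre : ∀ p : ℝ × ℝ, (starRingEnd ℂ c * ((p.1 : ℂ) + p.2 * Complex.I)).re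
      = c.re * p.1 + c.im * p.2 := by
    intro p
    simp [Complex.mul_re, Complex.add_re, Complex.add_im, Complex.mul_im]
  have : ∀ p : ℝ × ℝ, ENNReal.ofReal (rexp ((starRingEnd ℂ c * ((p.1 : ℂ) + p.2 * Complex.I)).re))
      = ENNReal.ofReal (rexp (c.re * p.1)) * ENNReal.ofReal (rexp (c.im * p.2)) := by
    intro p
    rw [hre, Real.exp_add, ENNReal.ofReal_mul (Real.exp_nonneg _)]
  rw [lintegral_congr this, lintegral_prod_mul (f := fun x : ℝ => ENNReal.ofReal (rexp (c.re * x)))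
      (g := fun y : ℝ => ENNReal.ofReal (rexp (c.im * y))) (by fun_prop) (by fun_prop),
    lintegral_exp_gaussianReal, lintegral_exp_gaussianReal,
    ← ENNReal.ofReal_mul (Real.exp_nonneg _), ← Real.exp_add]
  congr 2
  have : ‖c‖ ^ 2 = c.re ^ 2 + c.im ^ 2 := by
    rw [Complex.sq_norm, Complex.normSq_apply]; ring
  rw [this]
  simp [Complex.mul_re]
  ring

theorem lintegral_pi_prod_fin {n : ℕ} {E : Fin n → Type*} [∀ i, MeasurableSpace (E i)]
    (μ : ∀ i, Measure (E i)) [∀ i, SigmaFinite (μ i)] (f : ∀ i, E i → ℝ≥0∞)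
    (hf : ∀ i, Measurable (f i)) :
    ∫⁻ x, ∏ i, f i (x i) ∂(Measure.pi μ) = ∏ i, ∫⁻ y, f i y ∂(μ i) := by
  induction n with
  | zero => simp [Measure.pi_of_empty]
  | succ n n_ih =>
      calc
        _ = ∫⁻ x : E 0 × ((i : Fin n) → E (Fin.succ i)),
            f 0 x.1 * ∏ i : Fin n, f (Fin.succ i) (x.2 i)
            ∂((μ 0).prod (Measure.pi fun i => μ (Fin.succ i))) := by
          rw [← ((measurePreserving_piFinSuccAbove μ 0).symm).lintegral_comp_emb
            (MeasurableEquiv.measurableEmbedding _)]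
          congr 1
          ext x
          simp_rw [MeasurableEquiv.piFinSuccAbove_symm_apply, Fin.insertNthEquiv,
            Fin.prod_univ_succ, Fin.insertNth_zero, Equiv.coe_fn_mk, Fin.zero_succAbove,
            Fin.cons_zero, Fin.cons_succ]
          rfl
        _ = (∫⁻ y, f 0 y ∂μ 0) * ∏ i : Fin n, ∫⁻ y, f (Fin.succ i) y ∂(μ (Fin.succ i)) := by
          rw [lintegral_prod_mul (f := fun y => f 0 y)
            (g := fun x : (i : Fin n) → E (Fin.succ i) => ∏ i : Fin n, f (Fin.succ i) (x i))
            (hf 0).aemeasurable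
            (by exact (Finset.measurable_prod _ fun i _ => (hf _).comp (measurable_pi_apply i)).aemeasurable),
            n_ih _ _ (fun i => hf _)]
        _ = ∏ i, ∫⁻ y, f i y ∂(μ i) := by rw [Fin.prod_univ_succ]

theorem lintegral_pi_prod {ι : Type*} [Fintype ι] {E : ι → Type*} [∀ i, MeasurableSpace (E i)]
    (μ : ∀ i, Measure (E i)) [∀ i, SigmaFinite (μ i)] (f : ∀ i, E i → ℝ≥0∞)
    (hf : ∀ i, Measurable (f i)) :
    ∫⁻ x, ∏ i, f i (x i) ∂(Measure.pi μ) = ∏ i, ∫⁻ y, f i y ∂(μ i) := by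
  let e := (equivFin ι).symm
  rw [MeasurePreserving.lintegral_map_equiv (fun x => ∏ i, f i (x i))
    (MeasurableEquiv.piCongrLeft E e) (measurePreserving_piCongrLeft μ e)]
  simp only [MeasurableEquiv.coe_piCongrLeft]
  have : ∀ a : (b : Fin (card ι)) → E (e b), ∏ x : ι, f x ((Equiv.piCongrLeft E e) a x)
      = ∏ b : Fin (card ι), f (e b) (a b) := by
    intro a
    rw [← e.prod_comp (fun x => f x ((Equiv.piCongrLeft E e) a x))]
    exact Finset.prod_congr rfl fun b _ => by rw [Equiv.piCongrLeft_apply_apply]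
  rw [lintegral_congr this, lintegral_pi_prod_fin _ _ (fun i => hf _), ← e.prod_comp]

lemma chernoff {ι : Type*} [Fintype ι] (m c : ι → ℂ) (V : ι → ℝ≥0) (a : ℝ) :
    (Measure.pi fun i => complexGaussian (m i) (V i))
      {y : ι → ℂ | a ≤ ∑ i, ((starRingEnd ℂ) (c i) * y i).re}
      ≤ ENNReal.ofReal
        (rexp ((∑ i, (((starRingEnd ℂ) (c i) * m i).re + ‖c i‖ ^ 2 * (V i) / 2)) - a)) := by
  set S : (ι → ℂ) → ℝ := fun y => ∑ i, ((starRingEnd ℂ) (c i) * y i).re with hS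
  have hmeas : ∀ i, Measurable (fun z : ℂ => ENNReal.ofReal (rexp (((starRingEnd ℂ) (c i) * z).re))) := by
    intro i; fun_prop
  have hgy : ∀ y : ι → ℂ, ENNReal.ofReal (rexp (S y))
      = ∏ i, ENNReal.ofReal (rexp (((starRingEnd ℂ) (c i) * y i).re)) := by
    intro y
    rw [hS, Real.exp_sum, ← ENNReal.ofReal_prod_of_nonneg (fun i _ => Real.exp_nonneg _)]
  have hint : ∫⁻ y, ENNReal.ofReal (rexp (S y)) ∂(Measure.pi fun i => complexGaussian (m i) (V i))
      = ENNReal.ofReal (rexp (∑ i, (((starRingEnd ℂ) (c i) * m i).re + ‖c i‖ ^ 2 * (V i) / 2))) := by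
    rw [lintegral_congr hgy, lintegral_pi_prod _ _ hmeas]
    simp_rw [lintegral_exp_complexGaussian]
    rw [← ENNReal.ofReal_prod_of_nonneg (fun i _ => Real.exp_nonneg _), ← Real.exp_sum]
  have hsub : {y : ι → ℂ | a ≤ S y} ⊆ {y | ENNReal.ofReal (rexp a) ≤ ENNReal.ofReal (rexp (S y))} :=
    fun y hy => ENNReal.ofReal_le_ofReal (Real.exp_le_exp.2 hy)
  have hmark := mul_meas_ge_le_lintegral₀ (μ := Measure.pi fun i => complexGaussian (m i) (V i))
    (f := fun y => ENNReal.ofReal (rexp (S y))) (by fun_prop) (ENNReal.ofReal (rexp a))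
  have h1 : (Measure.pi fun i => complexGaussian (m i) (V i)) {y : ι → ℂ | a ≤ S y}
      ≤ (Measure.pi fun i => complexGaussian (m i) (V i))
        {y | ENNReal.ofReal (rexp a) ≤ ENNReal.ofReal (rexp (S y))} := measure_mono hsub
  have hea : ENNReal.ofReal (rexp a) ≠ 0 := by
    simp [ENNReal.ofReal_eq_zero, not_le, Real.exp_pos]
  have h2 : (Measure.pi fun i => complexGaussian (m i) (V i))
      {y | ENNReal.ofReal (rexp a) ≤ ENNReal.ofReal (rexp (S y))}
      ≤ ENNReal.ofReal (rexp (∑ i, (((starRingEnd ℂ) (c i) * m i).re + ‖c i‖ ^ 2 * (V i) / 2)))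
        / ENNReal.ofReal (rexp a) := by
    rw [ENNReal.le_div_iff_mul_le (Or.inl hea) (Or.inl ENNReal.ofReal_ne_top), mul_comm]
    exact hmark.trans hint.le
  refine (h1.trans h2).trans ?_
  rw [← ENNReal.ofReal_div_of_pos (Real.exp_pos _), ← Real.exp_sub]

section
variable (σ : ℕ → ℝ) (v : ℕ → ℂ) (F : Finset ℕ)

lemma re_conj_smul (r : ℝ) (w z : ℂ) :
    ((starRingEnd ℂ) ((r : ℂ) * w) * z).re = r * ((starRingEnd ℂ) w * z).re := by
  rw [map_mul, Complex.conj_ofReal, mul_assoc, Complex.re_ofReal_mul]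

lemma norm_c (r : ℝ) (w : ℂ) : ‖(r : ℂ) * w‖ ^ 2 = r ^ 2 * ‖w‖ ^ 2 := by
  rw [norm_mul, Complex.norm_real, Real.norm_eq_abs, mul_pow, sq_abs]

lemma re_conj_mul_self (w : ℂ) : ((starRingEnd ℂ) w * w).re = ‖w‖ ^ 2 := by
  rw [Complex.sq_norm, Complex.normSq_apply]
  simp [Complex.mul_re]

lemma bound_mu (hσ : ∀ n, 0 < σ n) :
    (Measure.pi fun i : F => complexGaussian 0 (σ i ^ 2).toNNReal)
      {y : F → ℂ | (∑ i : F, ‖v i‖ ^ 2 / σ i ^ 2) / 2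
          ≤ ∑ i : F, ((starRingEnd ℂ) (v i) * y i).re / σ i ^ 2}
      ≤ ENNReal.ofReal (rexp (-(∑ i : F, ‖v i‖ ^ 2 / σ i ^ 2) / 8)) := by
  set t := ∑ i : F, ‖v i‖ ^ 2 / σ i ^ 2 with ht
  set c : F → ℂ := fun i => (((2 * σ i ^ 2)⁻¹ : ℝ) : ℂ) * v i with hc
  have hσ2 : ∀ i : F, (σ (i:ℕ) ^ 2 : ℝ) ≠ 0 := fun i => (pow_pos (hσ i) 2).ne'
  have hsum : ∀ y : F → ℂ, ∑ i : F, ((starRingEnd ℂ) (c i) * y i).re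
      = (∑ i : F, ((starRingEnd ℂ) (v i) * y i).re / σ i ^ 2) / 2 := by
    intro y
    rw [Finset.sum_div]
    refine Finset.sum_congr rfl fun i _ => ?_
    rw [hc, re_conj_smul, inv_mul_eq_div, div_div]
    ring_nf
  have hsub : {y : F → ℂ | t / 2 ≤ ∑ i : F, ((starRingEnd ℂ) (v i) * y i).re / σ i ^ 2}
      ⊆ {y : F → ℂ | t / 4 ≤ ∑ i : F, ((starRingEnd ℂ) (c i) * y i).re} := by
    intro y hy
    simp only [Set.mem_setOf_eq] at hy ⊢
    rw [hsum]
    linarith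
  refine (measure_mono hsub).trans ((chernoff (fun _ => 0) c _ (t / 4)).trans (le_of_eq ?_))
  congr 1
  have hE : ∑ i : F, (((starRingEnd ℂ) (c i) * (0:ℂ)).re
      + ‖c i‖ ^ 2 * ((σ (i:ℕ) ^ 2).toNNReal : ℝ) / 2) = t / 8 := by
    rw [ht, Finset.sum_div]
    refine Finset.sum_congr rfl fun i _ => ?_
    rw [hc, norm_c, Real.coe_toNNReal _ (sq_nonneg _)]
    simp only [mul_zero, Complex.zero_re, zero_add]
    have h0 : σ (i:ℕ) ≠ 0 := (hσ _).ne'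
    field_simp
    ring
  rw [hE]
  congr 1
  ring

lemma bound_nu (hσ : ∀ n, 0 < σ n) :
    (Measure.pi fun i : F => complexGaussian (v i) (σ i ^ 2).toNNReal)
      {y : F → ℂ | ∑ i : F, ((starRingEnd ℂ) (v i) * y i).re / σ i ^ 2
          < (∑ i : F, ‖v i‖ ^ 2 / σ i ^ 2) / 2}
      ≤ ENNReal.ofReal (rexp (-(∑ i : F, ‖v i‖ ^ 2 / σ i ^ 2) / 8)) := by
  set t := ∑ i : F, ‖v i‖ ^ 2 / σ i ^ 2 with ht
  set c : F → ℂ := fun i => ((-(2 * σ i ^ 2)⁻¹ : ℝ) : ℂ) * v i with hc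
  have hσ2 : ∀ i : F, (σ (i:ℕ) ^ 2 : ℝ) ≠ 0 := fun i => (pow_pos (hσ i) 2).ne'
  have hsum : ∀ y : F → ℂ, ∑ i : F, ((starRingEnd ℂ) (c i) * y i).re
      = -((∑ i : F, ((starRingEnd ℂ) (v i) * y i).re / σ i ^ 2) / 2) := by
    intro y
    rw [Finset.sum_div, ← Finset.sum_neg_distrib]
    refine Finset.sum_congr rfl fun i _ => ?_
    rw [hc, re_conj_smul, neg_mul, inv_mul_eq_div, div_div]
    ring_nf
  have hsub : {y : F → ℂ | ∑ i : F, ((starRingEnd ℂ) (v i) * y i).re / σ i ^ 2 < t / 2}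
      ⊆ {y : F → ℂ | -(t / 4) ≤ ∑ i : F, ((starRingEnd ℂ) (c i) * y i).re} := by
    intro y hy
    simp only [Set.mem_setOf_eq] at hy ⊢
    rw [hsum]
    linarith
  refine (measure_mono hsub).trans ((chernoff (fun i : F => v i) c _ (-(t / 4))).trans (le_of_eq ?_))
  congr 1
  have hE : ∑ i : F, (((starRingEnd ℂ) (c i) * v i).re
      + ‖c i‖ ^ 2 * ((σ (i:ℕ) ^ 2).toNNReal : ℝ) / 2) = -3 * t / 8 := by
    rw [ht, Finset.mul_sum, Finset.sum_div]
    refine Finset.sum_congr rfl fun i _ => ?_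
    rw [hc, re_conj_smul, re_conj_mul_self, norm_c, Real.coe_toNNReal _ (sq_nonneg _)]
    have h0 : σ (i:ℕ) ≠ 0 := (hσ _).ne'
    field_simp
    ring
  rw [hE]
  ring
end

/-- if `(σ_n)` are strictly positive and `(v_n)` are complex numbers with
`∑_n |v_n|²/σ_n² = ∞`, then the infinite product measures `μ = ⊗_n N_ℂ(0, σ_n²)` and
`ν = ⊗_n N_ℂ(v_n, σ_n²)` on `ℂ^ℕ` (with the product σ-algebra), characterized by their
finite-dimensional marginals, are mutually singular. -/
theorem shifted_gaussian_product_singular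
    (σ : ℕ → ℝ) (hσ : ∀ n, 0 < σ n) (v : ℕ → ℂ)
    (hsum : (∑' n : ℕ, ENNReal.ofReal (‖v n‖ ^ 2 / σ n ^ 2)) = ∞)
    (μ ν : Measure (ℕ → ℂ)) [IsProbabilityMeasure μ] [IsProbabilityMeasure ν]
    (hμ : ∀ s : Finset ℕ, μ.map s.restrict =
      Measure.pi (fun i : s => complexGaussian 0 (σ i ^ 2).toNNReal))
    (hν : ∀ s : Finset ℕ, ν.map s.restrict =
      Measure.pi (fun i : s => complexGaussian (v i) (σ i ^ 2).toNNReal)) :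
    μ ⟂ₘ ν := by
  classical
  set w : ℕ → ℝ := fun n => ‖v n‖ ^ 2 / σ n ^ 2 with hw
  have hw0 : ∀ n, 0 ≤ w n := fun n => div_nonneg (sq_nonneg _) (sq_nonneg _)
  -- choose big finsets
  have hF : ∀ k : ℕ, ∃ F : Finset ℕ, 8 * ((k : ℝ) + 1) ≤ ∑ i : F, w i := by
    intro k
    have h1 : (ENNReal.ofReal (8 * ((k : ℝ) + 1)))
        < ⨆ s : Finset ℕ, ∑ i ∈ s, ENNReal.ofReal (w i) := by
      rw [← ENNReal.tsum_eq_iSup_sum, hsum]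
      exact ENNReal.ofReal_lt_top
    obtain ⟨s, hs⟩ := lt_iSup_iff.mp h1
    refine ⟨s, ?_⟩
    rw [← ENNReal.ofReal_sum_of_nonneg (fun i _ => hw0 i)] at hs
    have := (ENNReal.ofReal_lt_ofReal_iff_of_nonneg (by positivity)).mp hs
    rw [Finset.sum_coe_sort]
    linarith
  choose F hFle using hF
  -- the events
  set T : ∀ s : Finset ℕ, (s → ℂ) → ℝ :=
    fun s y => ∑ i : s, ((starRingEnd ℂ) (v i) * y i).re / σ i ^ 2 with hT
  have hTmeas : ∀ s : Finset ℕ, Measurable (T s) := by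
    intro s
    refine Finset.measurable_sum _ fun i _ => ?_
    exact ((Complex.measurable_re.comp ((measurable_const.mul (measurable_pi_apply i))))).div_const _
  set B : ∀ k : ℕ, Set (↥(F k) → ℂ) :=
    fun k => {y | (∑ i : (F k : Finset ℕ), w i) / 2 ≤ T (F k) y} with hB
  have hBmeas : ∀ k, MeasurableSet (B k) :=
    fun k => measurableSet_le measurable_const (hTmeas _)
  set A : ℕ → Set (ℕ → ℂ) := fun k => (F k).restrict ⁻¹' (B k) with hA
  have hAmeas : ∀ k, MeasurableSet (A k) :=
    fun k => (Finset.measurable_restrict _) (hBmeas k)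
  have key : ∀ k : ℕ, -(∑ i : (F k : Finset ℕ), w i) / 8 ≤ -((k : ℝ) + 1) := by
    intro k
    have := hFle k
    linarith
  have hμA : ∀ k, μ (A k) ≤ ENNReal.ofReal (rexp (-((k : ℝ) + 1))) := by
    intro k
    rw [hA, ← Measure.map_apply (Finset.measurable_restrict _) (hBmeas k), hμ]
    refine (bound_mu σ v (F k) hσ).trans ?_
    exact ENNReal.ofReal_le_ofReal (Real.exp_le_exp.2 (key k))
  have hνA : ∀ k, ν ((A k)ᶜ) ≤ ENNReal.ofReal (rexp (-((k : ℝ) + 1))) := by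
    intro k
    have hAc : (A k)ᶜ = (F k).restrict ⁻¹' ((B k)ᶜ) := by
      rw [hA, Set.preimage_compl]
    rw [hAc, ← Measure.map_apply (Finset.measurable_restrict _) (hBmeas k).compl, hν]
    have hBc : (B k)ᶜ = {y : ↥(F k) → ℂ |
        T (F k) y < (∑ i : (F k : Finset ℕ), w i) / 2} := by
      rw [hB]
      ext y
      simp [not_le]
    rw [hBc]
    refine (bound_nu σ v (F k) hσ).trans ?_
    exact ENNReal.ofReal_le_ofReal (Real.exp_le_exp.2 (key k))
  -- geometric bound
  set r : ℝ≥0∞ := ENNReal.ofReal (rexp (-1)) with hr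
  have hrlt : r < 1 := by
    rw [hr]
    refine ENNReal.ofReal_lt_one.2 ?_
    rw [Real.exp_lt_one_iff]
    norm_num
  have hpow : ∀ k : ℕ, ENNReal.ofReal (rexp (-((k : ℝ) + 1))) = r ^ (k + 1) := by
    intro k
    rw [hr, ← ENNReal.ofReal_pow (Real.exp_nonneg _), ← Real.exp_nat_mul]
    congr 1
    push_cast
    ring
  -- Borel-Cantelli for μ
  have hμlim : μ (limsup A atTop) = 0 := by
    refine measure_limsup_atTop_eq_zero ?_
    have hle : (∑' k, μ (A k)) ≤ ∑' k : ℕ, r ^ (k + 1) := by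
      refine ENNReal.tsum_le_tsum fun k => ?_
      rw [← hpow k]
      exact hμA k
    refine ne_top_of_le_ne_top ?_ hle
    have : (∑' k : ℕ, r ^ (k + 1)) ≤ ∑' k : ℕ, r ^ k := by
      refine ENNReal.tsum_le_tsum fun k => ?_
      rw [pow_succ]
      exact mul_le_of_le_one_right' hrlt.le
    refine ne_top_of_le_ne_top ?_ this
    rw [ENNReal.tsum_geometric]
    exact ENNReal.inv_ne_top.2 (by simp [tsub_eq_zero_iff_le, hrlt.not_ge])
  -- complement for ν
  have hνlim : ν ((limsup A atTop)ᶜ) = 0 := by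
    have hcompl : (limsup A atTop)ᶜ = ⋃ n : ℕ, ⋂ k : ℕ, ⋂ (_ : n ≤ k), (A k)ᶜ := by
      rw [limsup_eq_iInf_iSup_of_nat]
      simp only [Set.iSup_eq_iUnion, Set.iInf_eq_iInter, Set.compl_iInter, Set.compl_iUnion]
    rw [hcompl]
    refine measure_iUnion_null fun n => ?_
    have hle : ∀ k : ℕ, n ≤ k → ν (⋂ k : ℕ, ⋂ (_ : n ≤ k), (A k)ᶜ) ≤ r ^ (k + 1) := by
      intro k hk
      refine (measure_mono ?_).trans ((hνA k).trans (hpow k).le)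
      exact Set.iInter_subset_of_subset k (Set.iInter_subset _ hk)
    have htend : Tendsto (fun k : ℕ => r ^ (k + 1)) atTop (nhds 0) :=
      (ENNReal.tendsto_pow_atTop_nhds_zero_of_lt_one hrlt).comp (tendsto_add_atTop_nat 1)
    have := ge_of_tendsto htend (eventually_atTop.2 ⟨n, hle⟩)
    exact le_antisymm this zero_le
  exact ⟨limsup A atTop, MeasurableSet.measurableSet_limsup hAmeas, hμlim, hνlim⟩
end
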